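/- Let G be a simple graph on a finite vertex set of size n, and let α, ε be reals with 0 < ε ≤ α ≤ 1. Let C be a finite set of vertices such that every v ∈ C satisfies |Γ(v) ∩ C| ≥ α|C| and every v ∉ C satisfies |Γ(v) ∩ C| ≤ (α−ε/2)|C|. Let T be a natural number with T ≤ |C| and T ≥ (32/ε²)·ln(4n). Then there exists a subset S ⊆ C with |S| = T such that {v : |Γ(v) ∩ S| ≥ (α−ε/4)T} = C. -/

import Mathlib

open Finset

lemma my_exp_neg_quad (x : ℝ) (hx : 0 ≤ x) : Real.exp (-x) ≤ 1 - x + x^2/2 := by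
  have key : ∀ y : ℝ, HasDerivAt (fun z : ℝ => 1 - z + z^2/2 - Real.exp (-z))
      (-1 + y + Real.exp (-y)) y := by
    intro y
    have h1 : HasDerivAt (fun z : ℝ => Real.exp (-z)) (-Real.exp (-y)) y := by
      exact ((Real.hasDerivAt_exp (-y)).comp y (hasDerivAt_neg y)).congr_deriv (by ring)
    have h2 : HasDerivAt (fun z : ℝ => 1 - z + z^2/2) (-1 + y) y := by
      have hp : HasDerivAt (fun z : ℝ => z^2/2) y y := by
        simpa using (hasDerivAt_pow 2 y).div_const 2
      have := ((hasDerivAt_const y (1:ℝ)).sub (hasDerivAt_id y)).add hp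
      exact this.congr_deriv (by ring)
    exact (h2.sub h1).congr_deriv (by ring)
  have mono : MonotoneOn (fun z : ℝ => 1 - z + z^2/2 - Real.exp (-z)) (Set.Ici 0) := by
    apply monotoneOn_of_deriv_nonneg (convex_Ici 0)
    · exact (Continuous.continuousOn (by continuity))
    · intro y hy
      exact (key y).differentiableAt.differentiableWithinAt
    · intro y hy
      rw [(key y).deriv]
      nlinarith [Real.add_one_le_exp (-y)]
  have h0 : (fun z : ℝ => 1 - z + z^2/2 - Real.exp (-z)) 0 = 0 := by simp
  have := mono (Set.self_mem_Ici) hx hx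
  simp only [h0] at this
  linarith [this]

lemma my_exp_quad (x : ℝ) (h0 : 0 ≤ x) (h1 : x ≤ 1) :
    Real.exp x ≤ 1 + x + (3/4) * x^2 := by
  have := Real.exp_bound' h0 h1 (n := 2) (by norm_num)
  simp [Finset.sum_range_succ, Nat.factorial] at this
  nlinarith [this]

lemma chernoff_pt (p t : ℝ) (hp : 0 ≤ p) (ht : 0 < t) (hpt : p + t ≤ 1) :
    ∃ l : ℝ, 0 ≤ l ∧ p * Real.exp l + (1 - p) ≤ Real.exp ((p + t) * l - t^2/2) := by
  have ht1 : t ≤ 1 := by linarith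
  rcases le_or_gt p (2*t/3) with hc1 | hc1
  · -- l = 1
    refine ⟨1, zero_le_one, ?_⟩
    have he : Real.exp 1 < 2.7182818286 := Real.exp_one_lt_d9
    have h1 : p * Real.exp 1 + (1 - p) ≤ 1 + p * (Real.exp 1 - 1) := by ring_nf; simp
    have h2 : (1 : ℝ) + p * (Real.exp 1 - 1) ≤ Real.exp (p * (Real.exp 1 - 1)) := by
      linarith [Real.add_one_le_exp (p * (Real.exp 1 - 1))]
    have h3 : p * (Real.exp 1 - 1) ≤ (p + t) * 1 - t^2/2 := by nlinarith
    calc p * Real.exp 1 + (1 - p) ≤ Real.exp (p * (Real.exp 1 - 1)) := by linarith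
      _ ≤ Real.exp ((p + t) * 1 - t^2/2) := Real.exp_le_exp.2 h3
  rcases le_or_gt p (2/3) with hc2 | hc2
  · -- l = 2t/(3p)
    have hp0 : 0 < p := lt_of_le_of_lt (by positivity) hc1
    set l : ℝ := 2*t/(3*p) with hl
    have hl0 : 0 < l := by positivity
    have hl1 : l ≤ 1 := by
      rw [hl, div_le_one (by positivity)]; linarith
    have hlp : 3 * p * l = 2 * t := by rw [hl]; field_simp
    refine ⟨l, hl0.le, ?_⟩
    have h1 : Real.exp l ≤ 1 + l + (3/4) * l^2 := my_exp_quad l hl0.le hl1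
    have h2 : p * Real.exp l + (1 - p) ≤ 1 + p * (l + (3/4) * l^2) := by nlinarith
    have h3 : (1:ℝ) + p * (l + (3/4) * l^2) ≤ Real.exp (p * (l + (3/4) * l^2)) := by
      linarith [Real.add_one_le_exp (p * (l + (3/4) * l^2))]
    have h4 : p * (l + (3/4) * l^2) ≤ (p + t) * l - t^2/2 := by nlinarith
    calc p * Real.exp l + (1 - p) ≤ Real.exp (p * (l + (3/4) * l^2)) := by linarith
      _ ≤ Real.exp ((p + t) * l - t^2/2) := Real.exp_le_exp.2 h4
  · -- l = t/q, q = 1 - p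
    have hq0 : 0 < 1 - p := by linarith [lt_of_lt_of_le (lt_add_of_pos_right p ht) hpt]
    obtain ⟨q, hq⟩ : ∃ q : ℝ, q = 1 - p := ⟨_, rfl⟩
    obtain ⟨l, hl⟩ : ∃ l : ℝ, l = t / q := ⟨_, rfl⟩
    rw [← hq] at hq0
    have hq1 : q ≤ 1 := by rw [hq]; linarith
    have hl0 : 0 < l := by rw [hl]; positivity
    have hlq : q * l = t := by rw [hl]; field_simp
    refine ⟨l, hl0.le, ?_⟩
    have h1 : Real.exp (-l) ≤ 1 - l + l^2/2 := my_exp_neg_quad l hl0.le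
    have hel : 0 < Real.exp l := Real.exp_pos l
    have h2 : p * Real.exp l + q = Real.exp l * (p + q * Real.exp (-l)) := by
      rw [Real.exp_neg]; field_simp
    have h3 : p + q * Real.exp (-l) ≤ 1 + (- (q*l) + q * l^2/2) := by nlinarith
    have h4 : (1:ℝ) + (- (q*l) + q * l^2/2) ≤ Real.exp (- (q*l) + q * l^2/2) := by
      linarith [Real.add_one_le_exp (- (q*l) + q * l^2/2)]
    have h5 : p * Real.exp l + (1 - p) ≤ Real.exp (l + (- (q*l) + q * l^2/2)) := by
      rw [Real.exp_add]
      calc p * Real.exp l + (1 - p) = Real.exp l * (p + q * Real.exp (-l)) := by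
            rw [← h2, hq]
        _ ≤ Real.exp l * Real.exp (- (q*l) + q * l^2/2) := by nlinarith
    have h6 : l + (- (q*l) + q * l^2/2) ≤ (p + t) * l - t^2/2 := by
      have e : t*l = q*(l*l) := by rw [← hlq]; ring
      have e2 : t^2 = q^2*(l*l) := by rw [← hlq]; ring
      have e3 : p*l = l - q*l := by rw [hq]; ring
      have hint : 0 ≤ (l*l)*q*(1-q) :=
        mul_nonneg (mul_nonneg (mul_nonneg (le_of_lt hl0) hl0.le) hq0.le) (by linarith)
      nlinarith [e, e2, e3, hint]
    exact le_trans h5 (Real.exp_le_exp.2 h6)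

lemma my_descFactorial_le (a c j : ℕ) (h : a ≤ c) :
    a.descFactorial j * c^j ≤ c.descFactorial j * a^j := by
  induction j with
  | zero => simp
  | succ j ih =>
    rw [Nat.descFactorial_succ, Nat.descFactorial_succ, pow_succ, pow_succ]
    have h1 : (a - j) * c ≤ (c - j) * a := by
      rw [Nat.sub_mul, Nat.sub_mul, Nat.mul_comm a c]
      exact Nat.sub_le_sub_left (Nat.mul_le_mul_left j h) (c * a)
    calc (a - j) * a.descFactorial j * (c ^ j * c)
        = ((a - j) * c) * (a.descFactorial j * c ^ j) := by ring
      _ ≤ ((c - j) * a) * (c.descFactorial j * a ^ j) := Nat.mul_le_mul h1 ih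
      _ = (c - j) * c.descFactorial j * (a ^ j * a) := by ring

lemma my_choose_pow_le (a c j : ℕ) (h : a ≤ c) :
    a.choose j * c^j ≤ c.choose j * a^j := by
  have hd := my_descFactorial_le a c j h
  rw [Nat.descFactorial_eq_factorial_mul_choose, Nat.descFactorial_eq_factorial_mul_choose,
    Nat.mul_assoc, Nat.mul_assoc] at hd
  exact Nat.le_of_mul_le_mul_left hd (Nat.factorial_pos j)

lemma my_inner_sum (a b T j : ℕ) (hj : j ≤ T) :
    ∑ k ∈ range (T+1), a.choose k * k.choose j * b.choose (T-k)
      = a.choose j * ((a - j) + b).choose (T - j) := by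
  have hsub : Finset.Ico j (T+1) ⊆ range (T+1) := by
    intro k hk; simp only [Finset.mem_Ico] at hk; simp [Finset.mem_range]; omega
  rw [← Finset.sum_subset hsub (by
    intro k hk hk2
    simp only [Finset.mem_Ico, Finset.mem_range] at hk hk2
    have : k < j := by omega
    rw [Nat.choose_eq_zero_of_lt this, Nat.mul_zero, Nat.zero_mul])]
  have hcong : ∀ k ∈ Finset.Ico j (T+1),
      a.choose k * k.choose j * b.choose (T-k)
        = a.choose j * ((a-j).choose (k-j) * b.choose (T-k)) := by
    intro k hk
    simp only [Finset.mem_Ico] at hk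
    rcases le_or_gt k a with hka | hka
    · rw [Nat.choose_mul hk.1, Nat.mul_assoc]
    · rcases le_or_gt j a with hja | hja
      · rw [Nat.choose_eq_zero_of_lt hka, Nat.choose_eq_zero_of_lt (show a - j < k - j by omega)]
        ring
      · rw [Nat.choose_eq_zero_of_lt hka, Nat.choose_eq_zero_of_lt hja]
        ring
  rw [Finset.sum_congr rfl hcong, ← Finset.mul_sum]
  congr 1
  rw [Finset.sum_Ico_eq_sum_range]
  rw [Nat.add_choose_eq, Finset.Nat.sum_antidiagonal_eq_sum_range_succ_mk]
  have : T + 1 - j = (T - j) + 1 := by omega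
  rw [this]
  apply Finset.sum_congr rfl
  intro i hi
  simp only [Finset.mem_range] at hi
  congr 2 <;> omega

lemma my_mgf_bound (a b T : ℕ) (hT : T ≤ a + b) (y : ℝ) (hy : 0 ≤ y) :
    ∑ k ∈ range (T+1), (a.choose k * b.choose (T-k) : ℝ) * (1+y)^k * ((a+b : ℕ) : ℝ)^T
      ≤ ((a+b).choose T : ℝ) * (((a+b : ℕ) : ℝ) + a*y)^T := by
  -- expand (1+y)^k
  have hexp : ∀ k ∈ range (T+1), (a.choose k * b.choose (T-k) : ℝ) * (1+y)^k * ((a+b:ℕ):ℝ)^T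
      = ∑ j ∈ range (T+1),
          (a.choose k * b.choose (T-k) : ℝ) * ((k.choose j : ℝ) * y^j) * ((a+b:ℕ):ℝ)^T := by
    intro k hk
    simp only [Finset.mem_range] at hk
    have h1 : (1+y)^k = ∑ j ∈ range (k+1), y^j * (1:ℝ)^(k-j) * (k.choose j : ℝ) := by
      rw [← add_pow]; ring_nf
    have h2a : ∑ j ∈ range (k+1), y^j * (1:ℝ)^(k-j) * (k.choose j : ℝ)
        = ∑ j ∈ range (T+1), y^j * (1:ℝ)^(k-j) * (k.choose j : ℝ) :=
      Finset.sum_subset (Finset.range_subset_range.2 (by omega)) (fun j hj hj2 => by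
        simp only [Finset.mem_range] at hj hj2
        rw [Nat.choose_eq_zero_of_lt (by omega)]
        simp)
    have h2 : ∑ j ∈ range (k+1), y^j * (1:ℝ)^(k-j) * (k.choose j : ℝ)
        = ∑ j ∈ range (T+1), (k.choose j : ℝ) * y^j := by
      rw [h2a]
      apply Finset.sum_congr rfl; intro j hj; rw [one_pow]; ring
    rw [h1, h2, Finset.mul_sum, Finset.sum_mul]
  rw [Finset.sum_congr rfl hexp, Finset.sum_comm]
  -- RHS binomial expansion
  have hrhs : (((a+b:ℕ):ℝ) + a*y)^T
      = ∑ j ∈ range (T+1), (T.choose j : ℝ) * ((a:ℝ)*y)^j * ((a+b:ℕ):ℝ)^(T-j) := by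
    rw [add_comm ((a+b:ℕ):ℝ) ((a:ℝ)*y), add_pow]
    apply Finset.sum_congr rfl; intro j hj; ring
  rw [hrhs, Finset.mul_sum]
  apply Finset.sum_le_sum
  intro j hj
  simp only [Finset.mem_range] at hj
  have hj' : j ≤ T := by omega
  -- inner sum over k
  have hin : ∑ k ∈ range (T+1),
      (a.choose k * b.choose (T-k) : ℝ) * ((k.choose j : ℝ) * y^j) * ((a+b:ℕ):ℝ)^T
      = ((a.choose j * ((a-j)+b).choose (T-j) : ℕ) : ℝ) * y^j * ((a+b:ℕ):ℝ)^T := by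
    rw [← my_inner_sum a b T j hj']
    push_cast
    rw [Finset.sum_mul, Finset.sum_mul]
    apply Finset.sum_congr rfl; intro k hk; ring
  rw [hin]
  rcases le_or_gt j a with hja | hja
  · -- main case : j ≤ a
    have hab : (a - j) + b = (a + b) - j := by omega
    rw [hab]
    have hid : (a+b).choose T * T.choose j = (a+b).choose j * ((a+b)-j).choose (T-j) :=
      Nat.choose_mul hj'
    have hkey : (a.choose j : ℝ) * (((a+b)-j).choose (T-j) : ℝ) * ((a+b:ℕ):ℝ)^T
        ≤ ((a+b).choose T : ℝ) * (T.choose j : ℝ) * (a:ℝ)^j * ((a+b:ℕ):ℝ)^(T-j) := by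
      have hc := my_choose_pow_le a (a+b) j (Nat.le_add_right a b)
      have hc' : (a.choose j : ℝ) * ((a+b:ℕ):ℝ)^j ≤ ((a+b).choose j : ℝ) * (a:ℝ)^j := by
        exact_mod_cast hc
      have hpow : ((a+b:ℕ):ℝ)^T = ((a+b:ℕ):ℝ)^j * ((a+b:ℕ):ℝ)^(T-j) := by
        rw [← pow_add]; congr 1; omega
      rw [hpow]
      have hnn1 : (0:ℝ) ≤ (((a+b)-j).choose (T-j) : ℝ) := by positivity
      have hnn2 : (0:ℝ) ≤ ((a+b:ℕ):ℝ)^(T-j) := by positivity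
      calc (a.choose j : ℝ) * (((a+b)-j).choose (T-j) : ℝ) * (((a+b:ℕ):ℝ)^j * ((a+b:ℕ):ℝ)^(T-j))
          = ((a.choose j : ℝ) * ((a+b:ℕ):ℝ)^j) * ((((a+b)-j).choose (T-j) : ℝ) * ((a+b:ℕ):ℝ)^(T-j)) := by ring
        _ ≤ (((a+b).choose j : ℝ) * (a:ℝ)^j) * ((((a+b)-j).choose (T-j) : ℝ) * ((a+b:ℕ):ℝ)^(T-j)) := by
            apply mul_le_mul_of_nonneg_right hc' (by positivity)
        _ = (((a+b).choose j : ℝ) * (((a+b)-j).choose (T-j) : ℝ)) * ((a:ℝ)^j * ((a+b:ℕ):ℝ)^(T-j)) := by ring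
        _ = (((a+b).choose T : ℝ) * (T.choose j : ℝ)) * ((a:ℝ)^j * ((a+b:ℕ):ℝ)^(T-j)) := by
            congr 1; exact_mod_cast congrArg (fun n : ℕ => (n:ℝ)) hid.symm
        _ = ((a+b).choose T : ℝ) * (T.choose j : ℝ) * (a:ℝ)^j * ((a+b:ℕ):ℝ)^(T-j) := by ring
    have hynn : (0:ℝ) ≤ y^j := by positivity
    have h2 := mul_le_mul_of_nonneg_right hkey hynn
    push_cast at h2 ⊢
    linear_combination h2
  · -- j > a : LHS is zero
    rw [Nat.choose_eq_zero_of_lt hja]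
    push_cast
    simp only [zero_mul]
    positivity

lemma my_fiber_card {V : Type*} [DecidableEq V] (A C : Finset V) (hAC : A ⊆ C) (T k : ℕ)
    (hk : k ≤ T) :
    ((powersetCard T C).filter (fun S => (S ∩ A).card = k)).card
      = A.card.choose k * (C \ A).card.choose (T - k) := by
  rw [← Finset.card_powersetCard k A, ← Finset.card_powersetCard (T-k) (C \ A),
    ← Finset.card_product]
  apply Finset.card_nbij' (fun S => (S ∩ A, S \ A)) (fun P => P.1 ∪ P.2)
  · intro S hS
    simp only [Finset.mem_coe, Finset.mem_filter, Finset.mem_powersetCard] at hS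
    obtain ⟨⟨hSC, hST⟩, hSk⟩ := hS
    simp only [Finset.mem_coe, Finset.mem_product, Finset.mem_powersetCard]
    refine ⟨⟨Finset.inter_subset_right, hSk⟩, ?_, ?_⟩
    · exact Finset.sdiff_subset_sdiff hSC (le_refl A)
    · have := Finset.card_inter_add_card_sdiff S A
      omega
  · intro P hP
    simp only [Finset.mem_coe, Finset.mem_product, Finset.mem_powersetCard] at hP
    obtain ⟨⟨h1A, h1k⟩, h2CA, h2k⟩ := hP
    have hdisj : Disjoint P.1 P.2 :=
      Finset.disjoint_left.2 fun x hx1 hx2 => ((Finset.mem_sdiff.1 (h2CA hx2)).2 (h1A hx1))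
    simp only [Finset.mem_coe, Finset.mem_filter, Finset.mem_powersetCard]
    refine ⟨⟨?_, ?_⟩, ?_⟩
    · exact Finset.union_subset (h1A.trans hAC) (h2CA.trans (Finset.sdiff_subset))
    · rw [Finset.card_union_of_disjoint hdisj, h1k, h2k]; omega
    · have : (P.1 ∪ P.2) ∩ A = P.1 := by
        rw [Finset.union_inter_distrib_right, Finset.inter_eq_left.2 h1A]
        have : P.2 ∩ A = ∅ := by
          rw [Finset.eq_empty_iff_forall_notMem]
          intro x hx
          obtain ⟨hx2, hxA⟩ := Finset.mem_inter.1 hx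
          exact (Finset.mem_sdiff.1 (h2CA hx2)).2 hxA
        rw [this, Finset.union_empty]
      rw [this, h1k]
  · intro S hS
    simp only
    rw [Finset.union_comm, Finset.sdiff_union_inter]
  · intro P hP
    simp only [Finset.mem_coe, Finset.mem_product, Finset.mem_powersetCard] at hP
    obtain ⟨⟨h1A, h1k⟩, h2CA, h2k⟩ := hP
    have hP2A : P.2 ∩ A = ∅ := by
      rw [Finset.eq_empty_iff_forall_notMem]
      intro x hx
      obtain ⟨hx2, hxA⟩ := Finset.mem_inter.1 hx
      exact (Finset.mem_sdiff.1 (h2CA hx2)).2 hxA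
    have e1 : (P.1 ∪ P.2) ∩ A = P.1 := by
      rw [Finset.union_inter_distrib_right, Finset.inter_eq_left.2 h1A, hP2A, Finset.union_empty]
    have e2 : (P.1 ∪ P.2) \ A = P.2 := by
      rw [Finset.union_sdiff_distrib, Finset.sdiff_eq_empty_iff_subset.2 h1A]
      rw [Finset.empty_union]
      apply Finset.sdiff_eq_self_of_disjoint
      exact Finset.disjoint_left.2 fun x hx2 hxA => (Finset.mem_sdiff.1 (h2CA hx2)).2 hxA
    show ((P.1 ∪ P.2) ∩ A, (P.1 ∪ P.2) \ A) = P
    rw [e1, e2]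

lemma my_upper_tail {V : Type*} [DecidableEq V] (A C : Finset V) (hAC : A ⊆ C)
    (hC : 0 < C.card) (T : ℕ) (hT : T ≤ C.card)
    (t : ℝ) (ht : 0 < t) (hpt : (A.card : ℝ)/C.card + t ≤ 1) :
    (((powersetCard T C).filter
        (fun S => ((A.card : ℝ)/C.card + t) * T ≤ ((S ∩ A).card : ℝ))).card : ℝ)
      ≤ (C.card.choose T : ℝ) * Real.exp (-(t^2/2) * T) := by
  set a := A.card with ha
  set c := C.card with hc
  have hac : a ≤ c := Finset.card_le_card hAC
  have hb : (C \ A).card = c - a := by rw [Finset.card_sdiff_of_subset hAC]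
  have habc : a + (C \ A).card = c := by omega
  have hc0 : (0:ℝ) < (c:ℝ) := by exact_mod_cast hC
  set p : ℝ := (a:ℝ)/(c:ℝ) with hp
  have hp0 : 0 ≤ p := by positivity
  have hp1 : p ≤ 1 := by rw [hp, div_le_one hc0]; exact_mod_cast hac
  obtain ⟨l, hl0, hchern⟩ := chernoff_pt p t hp0 ht hpt
  have hx1 : (1:ℝ) ≤ Real.exp l := by linarith [Real.add_one_le_exp l]
  set Bad := (powersetCard T C).filter (fun S => (p + t) * T ≤ ((S ∩ A).card : ℝ)) with hBad
  -- Step A : Markov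
  have stepA : (Bad.card : ℝ) * Real.exp (l * ((p+t)*T))
      ≤ ∑ S ∈ powersetCard T C, Real.exp l ^ (S ∩ A).card := by
    have h1 : ∀ S ∈ Bad, Real.exp (l * ((p+t)*T)) ≤ Real.exp l ^ (S ∩ A).card := by
      intro S hS
      simp only [hBad, Finset.mem_filter] at hS
      rw [← Real.exp_nat_mul]
      apply Real.exp_le_exp.2
      calc l * ((p+t)*T) ≤ l * ((S ∩ A).card : ℝ) := by
            apply mul_le_mul_of_nonneg_left hS.2 hl0
        _ = ((S ∩ A).card : ℝ) * l := by ring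
    calc (Bad.card : ℝ) * Real.exp (l * ((p+t)*T))
        ≤ ∑ S ∈ Bad, Real.exp l ^ (S ∩ A).card := by
          rw [← nsmul_eq_mul]
          exact Finset.card_nsmul_le_sum Bad _ _ h1
      _ ≤ ∑ S ∈ powersetCard T C, Real.exp l ^ (S ∩ A).card := by
          apply Finset.sum_le_sum_of_subset_of_nonneg (Finset.filter_subset _ _)
          intro S _ _
          positivity
  -- Step B : mgf bound
  have stepB : ∑ S ∈ powersetCard T C, Real.exp l ^ (S ∩ A).card
      ≤ (c.choose T : ℝ) * Real.exp ((p+t)*l - t^2/2) ^ T := by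
    have hfib : ∑ S ∈ powersetCard T C, Real.exp l ^ (S ∩ A).card
        = ∑ k ∈ range (T+1),
            ((a.choose k * (C \ A).card.choose (T-k) : ℕ) : ℝ) * Real.exp l ^ k := by
      rw [← Finset.sum_fiberwise_of_maps_to (g := fun S => (S ∩ A).card)
        (t := range (T+1)) (fun S hS => by
          simp only [Finset.mem_powersetCard] at hS
          simp only [Finset.mem_range]
          have : (S ∩ A).card ≤ S.card := Finset.card_le_card Finset.inter_subset_left
          omega)]
      apply Finset.sum_congr rfl
      intro k hk
      simp only [Finset.mem_range] at hk
      have hk' : k ≤ T := by omega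
      rw [← my_fiber_card A C hAC T k hk']
      rw [Finset.sum_congr rfl (fun S hS => by
        simp only [Finset.mem_filter] at hS
        rw [hS.2])]
      rw [Finset.sum_const, nsmul_eq_mul]
    rw [hfib]
    set y : ℝ := Real.exp l - 1 with hy
    have hy0 : 0 ≤ y := by linarith
    have h1y : 1 + y = Real.exp l := by rw [hy]; ring
    have hmgf := my_mgf_bound a (C \ A).card T (by omega) y hy0
    rw [habc] at hmgf
    rw [h1y] at hmgf
    have hcT : (0:ℝ) < ((c:ℕ) : ℝ)^T := by positivity
    have hsummul : (∑ k ∈ range (T+1),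
        ((a.choose k * (C \ A).card.choose (T-k) : ℕ) : ℝ) * Real.exp l ^ k) * ((c:ℕ):ℝ)^T
        ≤ ((c.choose T : ℝ)) * (((c:ℕ):ℝ) + a*y)^T := by
      rw [Finset.sum_mul]
      calc ∑ k ∈ range (T+1),
            ((a.choose k * (C \ A).card.choose (T-k) : ℕ) : ℝ) * Real.exp l ^ k * ((c:ℕ):ℝ)^T
          = ∑ k ∈ range (T+1),
            (a.choose k * (C \ A).card.choose (T-k) : ℝ) * Real.exp l ^ k * ((c:ℕ):ℝ)^T := by
            apply Finset.sum_congr rfl; intro k _; push_cast; ring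
        _ ≤ (c.choose T : ℝ) * (((c:ℕ):ℝ) + a*y)^T := by exact_mod_cast hmgf
    have hkey : ((c:ℕ):ℝ) + a*y = (c:ℝ) * (p * Real.exp l + (1 - p)) := by
      rw [hp]
      field_simp
      ring
    have hbound : (c:ℝ) * (p * Real.exp l + (1 - p)) ≤ (c:ℝ) * Real.exp ((p+t)*l - t^2/2) :=
      mul_le_mul_of_nonneg_left hchern hc0.le
    have hpos : 0 ≤ p * Real.exp l + (1 - p) := by nlinarith
    calc ∑ k ∈ range (T+1),
          ((a.choose k * (C \ A).card.choose (T-k) : ℕ) : ℝ) * Real.exp l ^ k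
        = (∑ k ∈ range (T+1),
          ((a.choose k * (C \ A).card.choose (T-k) : ℕ) : ℝ) * Real.exp l ^ k) * ((c:ℕ):ℝ)^T / ((c:ℕ):ℝ)^T := by
          field_simp
      _ ≤ ((c.choose T : ℝ)) * (((c:ℕ):ℝ) + a*y)^T / ((c:ℕ):ℝ)^T := by
          gcongr
      _ = (c.choose T : ℝ) * (p * Real.exp l + (1 - p))^T := by
          rw [hkey, mul_pow]
          field_simp
      _ ≤ (c.choose T : ℝ) * Real.exp ((p+t)*l - t^2/2) ^ T := by
          apply mul_le_mul_of_nonneg_left _ (by positivity)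
          exact pow_le_pow_left₀ hpos hchern T
  -- combine
  have hEpos : (0:ℝ) < Real.exp (l * ((p+t)*T)) := Real.exp_pos _
  have hfinal : (Bad.card : ℝ) * Real.exp (l * ((p+t)*T))
      ≤ ((c.choose T : ℝ) * Real.exp (-(t^2/2) * T)) * Real.exp (l * ((p+t)*T)) := by
    have : Real.exp ((p+t)*l - t^2/2) ^ T
        = Real.exp (-(t^2/2) * T) * Real.exp (l * ((p+t)*T)) := by
      rw [← Real.exp_nat_mul, ← Real.exp_add]
      congr 1
      ring
    calc (Bad.card : ℝ) * Real.exp (l * ((p+t)*T))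
        ≤ (c.choose T : ℝ) * Real.exp ((p+t)*l - t^2/2) ^ T := le_trans stepA stepB
      _ = ((c.choose T : ℝ) * Real.exp (-(t^2/2) * T)) * Real.exp (l * ((p+t)*T)) := by
          rw [this]; ring
  exact le_of_mul_le_mul_right hfinal hEpos

set_option maxHeartbeats 2000000 in
/-- Identifiability of a dense community with an `ε/2` edge-fraction gap: it is exactly
determined by an edge-count threshold against some witness subset `S ⊆ C` of size `T`,
provided `T ≥ (32/ε²)·ln(4n)`. -/
theorem dense_identified_by_witness {V : Type*} [Fintype V] [DecidableEq V]
    (G : SimpleGraph V) [DecidableRel G.Adj]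
    (α ε : ℝ) (hε0 : 0 < ε) (hεα : ε ≤ α) (hα : α ≤ 1)
    (C : Finset V)
    (hin : ∀ v ∈ C, α * C.card ≤ ((G.neighborFinset v ∩ C).card : ℝ))
    (hout : ∀ v, v ∉ C → ((G.neighborFinset v ∩ C).card : ℝ) ≤ (α - ε / 2) * C.card)
    (T : ℕ) (hT1 : T ≤ C.card)
    (hT2 : (32 / ε ^ 2) * Real.log (4 * Fintype.card V) ≤ (T : ℝ)) :
    ∃ S ⊆ C, S.card = T ∧
      Finset.univ.filter
        (fun v => (α - ε / 4) * T ≤ ((G.neighborFinset v ∩ S).card : ℝ)) = C := by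
  classical
  set n := Fintype.card V with hn
  rcases Nat.eq_zero_or_pos n with hn0 | hn1
  · -- V is empty
    have hVempty : IsEmpty V := Fintype.card_eq_zero_iff.1 hn0
    have hCempty : C = ∅ := Finset.eq_empty_of_isEmpty C
    have hT0 : T = 0 := by
      have := hT1; rw [hCempty] at this; simpa using this
    refine ⟨∅, Finset.empty_subset C, by simp [hT0], ?_⟩
    rw [hCempty]
    simp [Finset.eq_empty_of_isEmpty]
  · -- main case
    have hnR : (1:ℝ) ≤ (n:ℝ) := by exact_mod_cast hn1
    have hlog : 0 < Real.log (4 * n) := Real.log_pos (by linarith)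
    have hε2 : (0:ℝ) < ε^2 := by positivity
    have hTpos : (0:ℝ) < (T:ℝ) :=
      lt_of_lt_of_le (by positivity) hT2
    have hT0 : 0 < T := by exact_mod_cast hTpos
    have hC0 : 0 < C.card := lt_of_lt_of_le hT0 hT1
    have hcR : (0:ℝ) < (C.card : ℝ) := by exact_mod_cast hC0
    set c := C.card with hc
    set N := c.choose T with hN
    set P := powersetCard T C with hP
    have hPcard : P.card = N := Finset.card_powersetCard T C
    have hNpos : 0 < N := Nat.choose_pos hT1
    -- the exponential bound
    have hexpkey : (n:ℝ) * Real.exp (-(((ε/4)^2)/2) * T) ≤ 1/4 := by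
      have h1 : Real.log (4*n) ≤ ((ε/4)^2/2) * T := by
        have := mul_le_mul_of_nonneg_left hT2 (le_of_lt (show (0:ℝ) < ε^2/32 by positivity))
        calc Real.log (4*n) = (ε^2/32) * ((32/ε^2) * Real.log (4*n)) := by field_simp
          _ ≤ (ε^2/32) * T := this
          _ = ((ε/4)^2/2) * T := by ring
      have h2 : Real.exp (-(((ε/4)^2)/2) * T) ≤ Real.exp (-Real.log (4*n)) := by
        apply Real.exp_le_exp.2; linarith
      have h3 : Real.exp (-Real.log (4*n)) = 1/(4*n) := by
        rw [Real.exp_neg, Real.exp_log (by linarith)]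
        rw [one_div]
      calc (n:ℝ) * Real.exp (-(((ε/4)^2)/2) * T) ≤ (n:ℝ) * (1/(4*n)) := by
            apply mul_le_mul_of_nonneg_left _ (by positivity)
            rw [← h3]; exact h2
        _ = 1/4 := by field_simp
    -- bad events
    obtain ⟨θ, hθ⟩ : ∃ θ : ℝ, θ = α - ε/4 := ⟨_, rfl⟩
    obtain ⟨Bv, hBv⟩ : ∃ Bv : V → Finset (Finset V), Bv = fun v =>
      if v ∈ C then P.filter (fun S => ¬ (θ * T ≤ ((G.neighborFinset v ∩ S).card : ℝ)))
      else P.filter (fun S => θ * T ≤ ((G.neighborFinset v ∩ S).card : ℝ)) := ⟨_, rfl⟩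
  -- per vertex bound
    have hvbound : ∀ v : V, ((Bv v).card : ℝ) ≤ (N:ℝ) * Real.exp (-(((ε/4)^2)/2) * T) := by
      intro v
      by_cases hvC : v ∈ C
      · -- v in C : use complement A = C \ nbr
        obtain ⟨A, hA⟩ : ∃ A, A = C \ G.neighborFinset v := ⟨_, rfl⟩
        have hAC : A ⊆ C := by rw [hA]; exact Finset.sdiff_subset
        have hcard : A.card + (C ∩ G.neighborFinset v).card = c := by
          rw [hA]; exact Finset.card_sdiff_add_card_inter C (G.neighborFinset v)
        have hinv := hin v hvC
        have hAcard : (A.card : ℝ) ≤ (1 - α) * c := by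
          have h1 : ((C ∩ G.neighborFinset v).card : ℝ) = ((G.neighborFinset v ∩ C).card : ℝ) := by
            rw [Finset.inter_comm]
          have h2 : (A.card : ℝ) + ((C ∩ G.neighborFinset v).card : ℝ) = (c:ℝ) := by
            exact_mod_cast hcard
          rw [h1] at h2
          linarith
        obtain ⟨t, htdef⟩ : ∃ t : ℝ, t = (1 - θ) - (A.card : ℝ)/c := ⟨_, rfl⟩
        have hpv : (A.card : ℝ)/c ≤ 1 - α := by
          rw [div_le_iff₀ hcR]; linarith
        have ht : ε/4 ≤ t := by
          rw [htdef, hθ]; linarith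
        have ht0 : 0 < t := lt_of_lt_of_le (by positivity) ht
        have hpt : (A.card : ℝ)/c + t ≤ 1 := by
          rw [htdef, hθ]; linarith
        obtain ⟨F, hF⟩ : ∃ F, F = (powersetCard T C).filter
            (fun S => (((A.card : ℝ)/C.card + t)) * T ≤ ((S ∩ A).card : ℝ)) := ⟨_, rfl⟩
        have hUT : ((F.card : ℕ) : ℝ) ≤ (N:ℝ) * Real.exp (-(t^2/2) * T) := by
          rw [hF]; exact my_upper_tail A C hAC hC0 T hT1 t ht0 hpt
        have hsub : Bv v ⊆ F := by
          rw [hF]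
          intro S hS
          rw [hBv] at hS
          simp only [if_pos hvC, Finset.mem_filter] at hS
          obtain ⟨hSP, hScond⟩ := hS
          have hSC : S ⊆ C ∧ S.card = T := Finset.mem_powersetCard.1 hSP
          rw [Finset.mem_filter]
          refine ⟨hSP, ?_⟩
          have hsplit : (S ∩ G.neighborFinset v).card + (S ∩ A).card = T := by
            have e : S \ G.neighborFinset v = S ∩ A := by
              rw [hA]
              ext x
              simp only [Finset.mem_sdiff, Finset.mem_inter]
              constructor
              · intro ⟨hx1, hx2⟩; exact ⟨hx1, hSC.1 hx1, hx2⟩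
              · intro ⟨hx1, _, hx3⟩; exact ⟨hx1, hx3⟩
            rw [← e, Finset.card_inter_add_card_sdiff, hSC.2]
          have hlt : ((G.neighborFinset v ∩ S).card : ℝ) < θ * T := by
            push_neg at hScond; exact hScond
          have hcomm : ((G.neighborFinset v ∩ S).card : ℝ) = ((S ∩ G.neighborFinset v).card : ℝ) := by
            rw [Finset.inter_comm]
          have hreal : ((S ∩ G.neighborFinset v).card : ℝ) + ((S ∩ A).card : ℝ) = (T:ℝ) := by
            exact_mod_cast hsplit
          have : ((A.card : ℝ)/c + t) = 1 - θ := by rw [htdef]; ring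
          rw [this]
          nlinarith [hreal, hlt, hcomm]
        calc ((Bv v).card : ℝ) ≤ ((F.card : ℕ) : ℝ) :=
              Nat.cast_le.2 (Finset.card_le_card hsub)
          _ ≤ (N:ℝ) * Real.exp (-(t^2/2) * T) := hUT
          _ ≤ (N:ℝ) * Real.exp (-(((ε/4)^2)/2) * T) := by
              apply mul_le_mul_of_nonneg_left _ (by positivity)
              apply Real.exp_le_exp.2
              nlinarith [pow_le_pow_left₀ (show (0:ℝ) ≤ ε/4 by positivity) ht 2, hTpos]
      · -- v not in C : A = nbr ∩ C
        obtain ⟨A, hA⟩ : ∃ A, A = G.neighborFinset v ∩ C := ⟨_, rfl⟩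
        have hAC : A ⊆ C := by rw [hA]; exact Finset.inter_subset_right
        have houtv := hout v hvC
        rw [← hA] at houtv
        obtain ⟨t, htdef⟩ : ∃ t : ℝ, t = θ - (A.card : ℝ)/c := ⟨_, rfl⟩
        have hpv : (A.card : ℝ)/c ≤ α - ε/2 := by
          rw [div_le_iff₀ hcR]; exact houtv
        have ht : ε/4 ≤ t := by rw [htdef, hθ]; linarith
        have ht0 : 0 < t := lt_of_lt_of_le (by positivity) ht
        have hpt : (A.card : ℝ)/c + t ≤ 1 := by
          rw [htdef, hθ]; linarith
        obtain ⟨F, hF⟩ : ∃ F, F = (powersetCard T C).filter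
            (fun S => (((A.card : ℝ)/C.card + t)) * T ≤ ((S ∩ A).card : ℝ)) := ⟨_, rfl⟩
        have hUT : ((F.card : ℕ) : ℝ) ≤ (N:ℝ) * Real.exp (-(t^2/2) * T) := by
          rw [hF]; exact my_upper_tail A C hAC hC0 T hT1 t ht0 hpt
        have hsub : Bv v ⊆ F := by
          rw [hF]
          intro S hS
          rw [hBv] at hS
          simp only [if_neg hvC, Finset.mem_filter] at hS
          obtain ⟨hSP, hScond⟩ := hS
          have hSC : S ⊆ C ∧ S.card = T := Finset.mem_powersetCard.1 hSP
          rw [Finset.mem_filter]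
          refine ⟨hSP, ?_⟩
          have e : S ∩ A = G.neighborFinset v ∩ S := by
            rw [hA]
            ext x
            simp only [Finset.mem_inter]
            constructor
            · intro ⟨hx1, hx2, _⟩; exact ⟨hx2, hx1⟩
            · intro ⟨hx1, hx2⟩; exact ⟨hx2, hx1, hSC.1 hx2⟩
          have : ((A.card : ℝ)/c + t) = θ := by rw [htdef]; ring
          rw [this, e]
          exact hScond
        calc ((Bv v).card : ℝ) ≤ ((F.card : ℕ) : ℝ) :=
              Nat.cast_le.2 (Finset.card_le_card hsub)
          _ ≤ (N:ℝ) * Real.exp (-(t^2/2) * T) := hUT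
          _ ≤ (N:ℝ) * Real.exp (-(((ε/4)^2)/2) * T) := by
              apply mul_le_mul_of_nonneg_left _ (by positivity)
              apply Real.exp_le_exp.2
              nlinarith [pow_le_pow_left₀ (show (0:ℝ) ≤ ε/4 by positivity) ht 2, hTpos]
    -- union bound
    set B := Finset.univ.biUnion Bv with hB
    have hBP : B ⊆ P := by
      intro S hS
      rw [hB, Finset.mem_biUnion] at hS
      obtain ⟨v, _, hSv⟩ := hS
      simp only [hBv] at hSv
      by_cases hvC : v ∈ C
      · rw [if_pos hvC] at hSv; exact Finset.mem_of_mem_filter S hSv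
      · rw [if_neg hvC] at hSv; exact Finset.mem_of_mem_filter S hSv
    have hBcard : (B.card : ℝ) < (P.card : ℝ) := by
      have h1 : B.card ≤ ∑ v : V, (Bv v).card := Finset.card_biUnion_le
      have h2 : ((∑ v : V, (Bv v).card : ℕ) : ℝ) ≤ (n:ℝ) * ((N:ℝ) * Real.exp (-(((ε/4)^2)/2) * T)) := by
        push_cast
        calc ∑ v : V, ((Bv v).card : ℝ) ≤ ∑ _v : V, (N:ℝ) * Real.exp (-(((ε/4)^2)/2) * T) :=
              Finset.sum_le_sum (fun v _ => hvbound v)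
          _ = (n:ℝ) * ((N:ℝ) * Real.exp (-(((ε/4)^2)/2) * T)) := by
              rw [Finset.sum_const, Finset.card_univ, nsmul_eq_mul, hn]
      have h3 : (n:ℝ) * ((N:ℝ) * Real.exp (-(((ε/4)^2)/2) * T))
          ≤ (N:ℝ) * (1/4) := by
        have := mul_le_mul_of_nonneg_left hexpkey (show (0:ℝ) ≤ (N:ℝ) by positivity)
        calc (n:ℝ) * ((N:ℝ) * Real.exp (-(((ε/4)^2)/2) * T))
            = (N:ℝ) * ((n:ℝ) * Real.exp (-(((ε/4)^2)/2) * T)) := by ring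
          _ ≤ (N:ℝ) * (1/4) := this
      have hNR : (1:ℝ) ≤ (N:ℝ) := by exact_mod_cast hNpos
      have : (B.card : ℝ) ≤ (N:ℝ)*(1/4) := le_trans (by exact_mod_cast h1) (le_trans h2 h3)
      rw [hPcard]
      nlinarith
    have hBcard' : B.card < P.card := by exact_mod_cast hBcard
    have hnotsub : ¬ P ⊆ B := fun h => absurd (Finset.card_le_card h) (by omega)
    obtain ⟨S, hSP, hSB⟩ := Finset.not_subset.1 hnotsub
    obtain ⟨hSC, hST⟩ := Finset.mem_powersetCard.1 hSP
    refine ⟨S, hSC, hST, ?_⟩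
    ext v
    simp only [Finset.mem_filter, Finset.mem_univ, true_and]
    have hSnot : S ∉ Bv v := fun h => hSB (Finset.mem_biUnion.2 ⟨v, Finset.mem_univ v, h⟩)
    constructor
    · intro hcond
      by_contra hvC
      apply hSnot
      simp only [hBv]
      rw [if_neg hvC]
      rw [hθ]
      exact Finset.mem_filter.2 ⟨hSP, hcond⟩
    · intro hvC
      by_contra hcond
      apply hSnot
      simp only [hBv]
      rw [if_pos hvC]
      rw [hθ]
      exact Finset.mem_filter.2 ⟨hSP, hcond⟩
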